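/- Let (T,X) be an IP-transitive topological semiflow on a first countable compact Hausdorff space X which is not a singleton. Then no point of X is a distal point for (T,X); i.e., for every x ∈ X there exists y ≠ x such that (x,y) is a proximal pair. -/

import Mathlib

open Filter Topology Set Uniformity

/-- The hitting-time set `N_T(U,V) = {t ∈ T : ∃ x ∈ U, t • x ∈ V}`. -/
def HittingTimes (T : Type*) {X : Type*} [Monoid T] [MulAction T X] (U V : Set X) : Set T :=
  {t : T | ∃ x ∈ U, t • x ∈ V}

/-- A subset `A` of a monoid `T` is an *IP-set* if it contains all finite products
`p i₁ * p i₂ * ⋯ * p i_k` (in increasing order of indices) for some sequence `p`. -/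
def IsIPSet {T : Type*} [Monoid T] (A : Set T) : Prop :=
  ∃ p : ℕ → T, ∀ l : List ℕ, l ≠ [] → l.Chain' (· < ·) → (l.map p).prod ∈ A

attribute [local instance] Ultrafilter.mul Ultrafilter.semigroup

/-- Every element of `Hindman.FP a` is a product of terms of `a` along a strictly
increasing list of indices. -/
lemma fp_exists_list {T : Type*} [Monoid T] {a : Stream' T} {m : T}
    (h : m ∈ Hindman.FP a) :
    ∃ l : List ℕ, l ≠ [] ∧ l.Chain' (· < ·) ∧ (l.map a.get).prod = m := by
  induction h with
  | head' a =>
      exact ⟨[0], by simp, by simp [List.Chain'], by simp [Stream'.head]⟩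
  | tail' a m h ih =>
      obtain ⟨l, hne, hch, hprod⟩ := ih
      refine ⟨l.map (· + 1), by simpa using hne, ?_, ?_⟩
      · unfold List.Chain' at hch ⊢
        rw [List.isChain_map]
        exact hch.imp fun a b h => by omega
      · rw [List.map_map, ← hprod,
          show a.get ∘ (· + 1) = a.tail.get from funext fun i => Stream'.get_tail.symm]
  | cons' a m h ih =>
      obtain ⟨l, hne, hch, hprod⟩ := ih
      refine ⟨0 :: l.map (· + 1), by simp, ?_, ?_⟩
      · unfold List.Chain' at hch ⊢
        rw [List.isChain_cons]
        constructor
        · intro i hi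
          obtain ⟨j, _, rfl⟩ := List.mem_map.mp (List.mem_of_mem_head? hi)
          omega
        · rw [List.isChain_map]
          exact hch.imp fun a b h => by omega
      · rw [List.map_cons, List.prod_cons, List.map_map]
        have h2 : List.map (a.get ∘ (· + 1)) l = List.map a.tail.get l :=
          List.map_congr_left fun i _ => Stream'.get_tail
        rw [h2, hprod]

/-- An IP-transitive topological semiflow on a first countable compact Hausdorff space
with at least two points has no distal points: for every `x ∈ X` there is `y ≠ x`
proximal to `x`. -/
theorem ipTransitive_no_distal_point
    {T X : Type*} [Monoid T] [TopologicalSpace T] [ContinuousMul T]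
    [UniformSpace X] [CompactSpace X] [T2Space X] [FirstCountableTopology X]
    [MulAction T X] [ContinuousSMul T X]
    (hnontriv : ∃ a b : X, a ≠ b)
    (hip : ∀ U V : Set X, IsOpen U → U.Nonempty → IsOpen V → V.Nonempty →
      IsIPSet (HittingTimes T U V)) :
    ∀ x : X, ∃ y : X, y ≠ x ∧ ∀ ε ∈ 𝓤 X, ∃ t : T, (t • x, t • y) ∈ ε := by
  intro x
  by_cases hQ : ∀ W ∈ 𝓝 x, ∀ p : ℕ → T,
      ∃ l : List ℕ, l ≠ [] ∧ l.Chain' (· < ·) ∧ (l.map p).prod • x ∈ W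
  · -- Case A: every IP set contains an element sending `x` into any given nbhd of `x`.
    obtain ⟨W, hW⟩ := (𝓝 x).exists_antitone_basis
    set V : ℕ → Set X := fun n => interior (W n) with hV
    have hVopen : ∀ n, IsOpen (V n) := fun n => isOpen_interior
    have hVmemx : ∀ n, x ∈ V n := fun n =>
      mem_interior_iff_mem_nhds.mpr (hW.mem n)
    have hVnhds : ∀ n, V n ∈ 𝓝 x := fun n => (hVopen n).mem_nhds (hVmemx n)
    -- the inductive step
    have step : ∀ (n : ℕ) (Y : {S : Set X // IsOpen S ∧ S.Nonempty}),
        ∃ Y' : {S : Set X // IsOpen S ∧ S.Nonempty}, ∃ t : T,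
          closure Y'.1 ⊆ Y.1 ∧ t • x ∈ V n ∧ ∀ z ∈ closure Y'.1, t • z ∈ V n := by
      intro n ⟨Y, hYopen, hYne⟩
      obtain ⟨p, hp⟩ := hip Y (V n) hYopen hYne (hVopen n) ⟨x, hVmemx n⟩
      obtain ⟨l, hlne, hlch, hlx⟩ := hQ (V n) (hVnhds n) p
      set t : T := (l.map p).prod with ht
      obtain ⟨y₁, hy₁Y, hy₁V⟩ := hp l hlne hlch
      have hOopen : IsOpen (Y ∩ (fun z => t • z) ⁻¹' (V n)) :=
        hYopen.inter ((hVopen n).preimage (continuous_const_smul t))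
      have hy₁O : y₁ ∈ Y ∩ (fun z => t • z) ⁻¹' (V n) := ⟨hy₁Y, hy₁V⟩
      obtain ⟨C, hC𝓝, hCclosed, hCO⟩ :=
        exists_mem_nhds_isClosed_subset (hOopen.mem_nhds hy₁O)
      refine ⟨⟨interior C, isOpen_interior, ⟨y₁, mem_interior_iff_mem_nhds.mpr hC𝓝⟩⟩,
        t, ?_, hlx, ?_⟩
      · intro z hz
        have : z ∈ C := by
          have := closure_mono (interior_subset (s := C)) hz
          rwa [hCclosed.closure_eq] at this
        exact (hCO this).1
      · intro z hz
        have : z ∈ C := by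
          have := closure_mono (interior_subset (s := C)) hz
          rwa [hCclosed.closure_eq] at this
        exact (hCO this).2
    choose f g h1 h2 h3 using step
    -- starting set: the complement of {x}
    have hY0 : IsOpen ({x}ᶜ : Set X) ∧ ({x}ᶜ : Set X).Nonempty := by
      refine ⟨isOpen_compl_singleton, ?_⟩
      obtain ⟨a, b, hab⟩ := hnontriv
      by_cases ha : a = x
      · exact ⟨b, by simp [ha ▸ hab.symm]⟩
      · exact ⟨a, ha⟩
    set seq : ℕ → {S : Set X // IsOpen S ∧ S.Nonempty} :=
      fun n => Nat.rec ⟨({x}ᶜ : Set X), hY0⟩ (fun n Yn => f n Yn) n with hseq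
    have hseq_succ : ∀ n, seq (n + 1) = f n (seq n) := fun n => rfl
    set ts : ℕ → T := fun n => g n (seq n) with hts
    set K : ℕ → Set X := fun n => closure (seq (n + 1)).1 with hK
    have hKanti : ∀ n, K (n + 1) ⊆ K n := by
      intro n
      calc K (n + 1) = closure (f (n + 1) (seq (n + 1))).1 := by rw [hK, hseq_succ]
        _ ⊆ (seq (n + 1)).1 := h1 _ _
        _ ⊆ closure (seq (n + 1)).1 := subset_closure
    have hKne : ∀ n, (K n).Nonempty := fun n =>
      (seq (n + 1)).2.2.mono subset_closure
    have hKclosed : ∀ n, IsClosed (K n) := fun n => isClosed_closure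
    obtain ⟨y, hy⟩ := IsCompact.nonempty_iInter_of_sequence_nonempty_isCompact_isClosed
      K hKanti hKne ((hKclosed 0).isCompact) hKclosed
    have hyK : ∀ n, y ∈ K n := fun n => mem_iInter.mp hy n
    refine ⟨y, ?_, ?_⟩
    · -- y ≠ x
      have : y ∈ ({x}ᶜ : Set X) := h1 0 (seq 0) (hyK 0)
      simpa using this
    · -- proximality
      intro ε hε
      obtain ⟨s, hs, hsymm, hcomp⟩ := comp_symm_mem_uniformity_sets hε
      have hball : UniformSpace.ball x s ∈ 𝓝 x := UniformSpace.ball_mem_nhds x hs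
      obtain ⟨n, -, hn⟩ := hW.toHasBasis.mem_iff.mp hball
      refine ⟨ts n, hcomp ?_⟩
      have hx1 : ts n • x ∈ V n := h2 n (seq n)
      have hy1 : ts n • y ∈ V n := h3 n (seq n) y (hyK n)
      have hxs : (x, ts n • x) ∈ s := hn (interior_subset hx1)
      have hys : (x, ts n • y) ∈ s := hn (interior_subset hy1)
      exact SetRel.prodMk_mem_comp (SetRel.symm (R := s) hxs) hys
  · -- Case B: some IP set avoids returning `x` to a neighborhood `W` of `x`.
    push_neg at hQ
    obtain ⟨W, hWnhds, p, hp⟩ := hQ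
    have hxint : x ∈ interior W := mem_interior_iff_mem_nhds.mpr hWnhds
    obtain ⟨U, hUidem, hUFP⟩ := Hindman.exists_idempotent_ultrafilter_le_FP (p : Stream' T)
    -- all elements of the ultrafilter-large FP set move x out of `interior W`
    have hS : ∀ᶠ t in (U : Filter T), t • x ∉ interior W := by
      filter_upwards [hUFP] with m hm
      obtain ⟨l, hlne, hlch, hlprod⟩ := fp_exists_list hm
      have h := hp l hlne hlch
      rw [show (List.map p l) = List.map (Stream'.get (p : Stream' T)) l from rfl, hlprod] at h
      exact fun hmem => h (interior_subset hmem)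
    -- the limit y of t • x along U
    obtain ⟨y, hylim⟩ : ∃ y, Tendsto (fun t : T => t • x) (U : Filter T) (𝓝 y) := by
      obtain ⟨y, -, h⟩ := isCompact_univ.ultrafilter_le_nhds
        (U.map (fun t : T => t • x)) (le_principal_iff.mpr univ_mem)
      rw [Ultrafilter.coe_map] at h
      exact ⟨y, h⟩
    have hyne : y ≠ x := by
      have : y ∈ (interior W)ᶜ :=
        (isOpen_interior.isClosed_compl).mem_of_tendsto hylim hS
      intro h
      exact this (h ▸ hxint)
    -- idempotence: t • y → y along U
    have hylim2 : Tendsto (fun t : T => t • y) (U : Filter T) (𝓝 y) := by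
      rw [(nhds_basis_opens y).tendsto_right_iff]
      rintro O ⟨hyO, hOopen⟩
      obtain ⟨C, hC𝓝, hCclosed, hCO⟩ :=
        exists_mem_nhds_isClosed_subset (hOopen.mem_nhds hyO)
      have hB : ∀ᶠ r in (U : Filter T), r • x ∈ interior C :=
        hylim (isOpen_interior.mem_nhds (mem_interior_iff_mem_nhds.mpr hC𝓝))
      have hB' : ∀ᶠ r in ((U * U : Ultrafilter T) : Filter T), r • x ∈ interior C := by
        rwa [hUidem]
      have hmul := (Ultrafilter.eventually_mul U U (fun r => r • x ∈ interior C)).mp hB'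
      filter_upwards [hmul] with t htev
      have htendsto : Tendsto (fun r : T => t • (r • x)) (U : Filter T) (𝓝 (t • y)) :=
        ((continuous_const_smul t).tendsto y).comp hylim
      have hev : ∀ᶠ r in (U : Filter T), t • (r • x) ∈ C := by
        filter_upwards [htev] with r hr
        rw [← mul_smul]
        exact interior_subset hr
      exact hCO (hCclosed.mem_of_tendsto htendsto hev)
    -- proximality
    refine ⟨y, hyne, ?_⟩
    intro ε hε
    obtain ⟨s, hs, hsymm, hcomp⟩ := comp_symm_mem_uniformity_sets hε
    have hball : UniformSpace.ball y s ∈ 𝓝 y := UniformSpace.ball_mem_nhds y hs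
    have h1 : ∀ᶠ t in (U : Filter T), t • x ∈ UniformSpace.ball y s := hylim hball
    have h2 : ∀ᶠ t in (U : Filter T), t • y ∈ UniformSpace.ball y s := hylim2 hball
    obtain ⟨t, ht1, ht2⟩ := (h1.and h2).exists
    exact ⟨t, hcomp (SetRel.prodMk_mem_comp (SetRel.symm (R := s) ht1) ht2)⟩
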